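/- Let v be a discrete valuation on a field K and let δ_v be the v-adic logarithmic distance on ℙ¹(K). Then for all points P₁, P₂, P₃ in ℙ¹(K), δ_v(P₁,P₃) ≥ min{δ_v(P₁,P₂), δ_v(P₂,P₃)}. -/

import Mathlib

noncomputable section

private lemma logDist_key (a b c : WithTop ℤ) (m₁ m₂ m₃ : ℤ)
    (h : min ((m₁:WithTop ℤ) + c) ((m₃:WithTop ℤ) + b) ≤ (m₂:WithTop ℤ) + a) :
    min (b - m₁ - m₂) (c - m₂ - m₃) ≤ a - m₁ - m₃ := by
  rcases a with _|a <;> rcases b with _|b <;> rcases c with _|c <;>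
    simp_all only [WithTop.none_eq_top, WithTop.some_eq_coe, min_le_iff, le_min_iff,
      WithTop.LinearOrderedAddCommGroup.top_sub, WithTop.LinearOrderedAddCommGroup.sub_top,
      WithTop.add_top, WithTop.top_add, le_top, top_le_iff, WithTop.add_eq_top,
      WithTop.coe_ne_top, or_false, false_or, true_or, or_true,
      ← WithTop.coe_add, ← WithTop.LinearOrderedAddCommGroup.coe_sub, WithTop.coe_le_coe] <;>
    omega

/-- The `v`-adic logarithmic distance between coordinate representatives of points of
`ℙ¹(K)`:  `δ_v(P₁,P₂) = v(x₁y₂ − x₂y₁) − min{v(x₁),v(y₁)} − min{v(x₂),v(y₂)}`. -/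
def logDist {K : Type} [Field K] (v : K → WithTop ℤ) (P Q : K × K) : WithTop ℤ :=
  v (P.1 * Q.2 - Q.1 * P.2) - min (v P.1) (v P.2) - min (v Q.1) (v Q.2)

/-- Ultrametric-type inequality for the `v`-adic logarithmic distance:
`δ_v(P₁,P₃) ≥ min{δ_v(P₁,P₂), δ_v(P₂,P₃)}` for all `P₁, P₂, P₃ ∈ ℙ¹(K)`. -/
theorem logDist_triangle {K : Type} [Field K] (v : K → WithTop ℤ)
    (hv0 : v 0 = ⊤) (hvfin : ∀ x : K, x ≠ 0 → v x ≠ ⊤)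
    (hvmul : ∀ x y : K, v (x * y) = v x + v y)
    (hvadd : ∀ x y : K, min (v x) (v y) ≤ v (x + y))
    (hvdisc : ∀ n : ℤ, ∃ x : K, v x = (n : WithTop ℤ))
    (P₁ P₂ P₃ : K × K) (h₁ : P₁ ≠ (0, 0)) (h₂ : P₂ ≠ (0, 0)) (h₃ : P₃ ≠ (0, 0)) :
    min (logDist v P₁ P₂) (logDist v P₂ P₃) ≤ logDist v P₁ P₃ := by
  -- the minima are finite
  have hmin : ∀ P : K × K, P ≠ (0, 0) → min (v P.1) (v P.2) ≠ ⊤ := by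
    intro P hP
    by_cases hx : P.1 = 0
    · have hy : P.2 ≠ 0 := fun hy => hP (Prod.ext hx hy)
      exact fun h => hvfin _ hy (top_le_iff.mp (h ▸ min_le_right (v P.1) (v P.2)))
    · exact fun h => hvfin _ hx (top_le_iff.mp (h ▸ min_le_left (v P.1) (v P.2)))
  obtain ⟨m₁, hm₁⟩ := Option.ne_none_iff_exists'.mp (hmin P₁ h₁)
  obtain ⟨m₂, hm₂⟩ := Option.ne_none_iff_exists'.mp (hmin P₂ h₂)
  obtain ⟨m₃, hm₃⟩ := Option.ne_none_iff_exists'.mp (hmin P₃ h₃)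
  rw [WithTop.some_eq_coe] at hm₁ hm₂ hm₃
  set a := v (P₁.1 * P₃.2 - P₃.1 * P₁.2) with ha
  set b := v (P₁.1 * P₂.2 - P₂.1 * P₁.2) with hb
  set c := v (P₂.1 * P₃.2 - P₃.1 * P₂.2) with hc
  have key : min ((m₁:WithTop ℤ) + c) ((m₃:WithTop ℤ) + b) ≤ (m₂:WithTop ℤ) + a := by
    rcases min_le_iff.mp (le_refl (min (v P₂.1) (v P₂.2))) with hx2 | hy2
    · -- use x-coordinate identity
      have hid : P₂.1 * (P₁.1 * P₃.2 - P₃.1 * P₁.2)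
          = P₁.1 * (P₂.1 * P₃.2 - P₃.1 * P₂.2) + P₃.1 * (P₁.1 * P₂.2 - P₂.1 * P₁.2) := by ring
      have h1 : min (v (P₁.1 * (P₂.1 * P₃.2 - P₃.1 * P₂.2)))
          (v (P₃.1 * (P₁.1 * P₂.2 - P₂.1 * P₁.2))) ≤ v P₂.1 + a := by
        rw [ha, ← hvmul, hid]; exact hvadd _ _
      calc min ((m₁:WithTop ℤ) + c) ((m₃:WithTop ℤ) + b)
          ≤ min (v P₁.1 + c) (v P₃.1 + b) := by
            refine min_le_min (add_le_add_left ?_ c) (add_le_add_left ?_ b)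
            · exact hm₁ ▸ min_le_left (v P₁.1) (v P₁.2)
            · exact hm₃ ▸ min_le_left (v P₃.1) (v P₃.2)
        _ ≤ v P₂.1 + a := by rw [hb, hc, ← hvmul, ← hvmul]; exact h1
        _ ≤ (m₂:WithTop ℤ) + a := by
            refine add_le_add_left ?_ a
            rw [← hm₂]; exact hx2
    · -- use y-coordinate identity
      have hid : P₂.2 * (P₁.1 * P₃.2 - P₃.1 * P₁.2)
          = P₁.2 * (P₂.1 * P₃.2 - P₃.1 * P₂.2) + P₃.2 * (P₁.1 * P₂.2 - P₂.1 * P₁.2) := by ring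
      have h1 : min (v (P₁.2 * (P₂.1 * P₃.2 - P₃.1 * P₂.2)))
          (v (P₃.2 * (P₁.1 * P₂.2 - P₂.1 * P₁.2))) ≤ v P₂.2 + a := by
        rw [ha, ← hvmul, hid]; exact hvadd _ _
      calc min ((m₁:WithTop ℤ) + c) ((m₃:WithTop ℤ) + b)
          ≤ min (v P₁.2 + c) (v P₃.2 + b) := by
            refine min_le_min (add_le_add_left ?_ c) (add_le_add_left ?_ b)
            · exact hm₁ ▸ min_le_right (v P₁.1) (v P₁.2)
            · exact hm₃ ▸ min_le_right (v P₃.1) (v P₃.2)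
        _ ≤ v P₂.2 + a := by rw [hb, hc, ← hvmul, ← hvmul]; exact h1
        _ ≤ (m₂:WithTop ℤ) + a := by
            refine add_le_add_left ?_ a
            rw [← hm₂]; exact hy2
  have := logDist_key a b c m₁ m₂ m₃ key
  simpa only [logDist, ← ha, ← hb, ← hc, hm₁, hm₂, hm₃] using this
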